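/- With U(m,j) = C(m-j,j)·2^j, for every t ≥ 1 the quantity D_t := Σ_{j=0}^{t-1} U(3t,j) − Σ_{j≥t+1} U(3t,j) equals the alternating sum Σ_{j=1}^{t} (-1)^(j-1)·C(2(t-j), t-j)·2^(t-j). -/

import Mathlib

/-- U(m,j) = C(m-j,j)·2^j (automatically 0 when 2j > m). -/
def U (m j : ℕ) : ℕ := Nat.choose (m - j) j * 2 ^ j

def C (t : ℕ) : ℕ := Nat.choose (2 * t) t * 2 ^ t

/-- The two-sided sum. -/
def Gm (m k : ℕ) : ℤ :=
  (∑ j ∈ Finset.range k, (U m j : ℤ)) - ∑ j ∈ Finset.Icc (k + 1) m, (U m j : ℤ)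

/-- The alternating sum. -/
def A (t : ℕ) : ℤ := ∑ j ∈ Finset.range t, (-1) ^ j * (C (t - 1 - j) : ℤ)

lemma Urec (m j : ℕ) : U (m + 2) (j + 1) = U (m + 1) (j + 1) + 2 * U m j := by
  rcases le_or_gt j m with h | h
  · unfold U
    rw [show m + 2 - (j + 1) = (m - j) + 1 from by omega,
        show m + 1 - (j + 1) = m - j from by omega,
        Nat.choose_succ_succ]
    ring
  · have e1 : U (m + 2) (j + 1) = 0 := by
      unfold U; rw [Nat.choose_eq_zero_of_lt (by omega)]; ring
    have e2 : U (m + 1) (j + 1) = 0 := by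
      unfold U; rw [Nat.choose_eq_zero_of_lt (by omega)]; ring
    have e3 : U m j = 0 := by
      unfold U; rw [Nat.choose_eq_zero_of_lt (by omega)]; ring
    rw [e1, e2, e3]

lemma Utop (m : ℕ) : U m (m + 1) = 0 := by
  unfold U
  rw [Nat.sub_eq_zero_of_le (by omega), Nat.choose_eq_zero_of_lt (by omega), zero_mul]

lemma Uzero (m : ℕ) : U m 0 = 1 := by simp [U]

lemma GR (m k : ℕ) (hk : k ≤ m) :
    Gm (m + 2) (k + 1) = Gm (m + 1) (k + 1) + 2 * Gm m k := by
  unfold Gm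
  have hS : (∑ j ∈ Finset.range (k + 1), (U (m + 2) j : ℤ))
      = (∑ j ∈ Finset.range (k + 1), (U (m + 1) j : ℤ))
        + 2 * ∑ j ∈ Finset.range k, (U m j : ℤ) := by
    rw [Finset.sum_range_succ' (fun j => (U (m + 2) j : ℤ)) k,
        Finset.sum_range_succ' (fun j => (U (m + 1) j : ℤ)) k]
    have : ∀ j, ((U (m + 2) (j + 1) : ℤ)) = (U (m + 1) (j + 1) : ℤ) + 2 * (U m j : ℤ) := by
      intro j; exact_mod_cast congrArg (Nat.cast (R := ℤ)) (Urec m j)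
    simp only [this, Uzero]
    rw [Finset.sum_add_distrib, Finset.mul_sum]
    push_cast
    ring
  have hmap : ∀ (f : ℕ → ℤ) (a b : ℕ),
      (∑ j ∈ Finset.Icc (a + 1) (b + 1), f j) = ∑ j ∈ Finset.Icc a b, f (j + 1) := by
    intro f a b
    rw [← Finset.map_add_right_Icc a b 1, Finset.sum_map]
    rfl
  have hT : (∑ j ∈ Finset.Icc (k + 2) (m + 2), (U (m + 2) j : ℤ))
      = (∑ j ∈ Finset.Icc (k + 2) (m + 1), (U (m + 1) j : ℤ))
        + 2 * ∑ j ∈ Finset.Icc (k + 1) m, (U m j : ℤ) := by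
    rw [hmap (fun j => (U (m + 2) j : ℤ)) (k + 1) (m + 1)]
    have : ∀ j, ((U (m + 2) (j + 1) : ℤ)) = (U (m + 1) (j + 1) : ℤ) + 2 * (U m j : ℤ) := by
      intro j; exact_mod_cast congrArg (Nat.cast (R := ℤ)) (Urec m j)
    simp only [this]
    rw [Finset.sum_add_distrib,
        ← hmap (fun j => (U (m + 1) j : ℤ)) (k + 1) (m + 1)]
    have h1 : (∑ j ∈ Finset.Icc (k + 2) (m + 2), (U (m + 1) j : ℤ))
        = ∑ j ∈ Finset.Icc (k + 2) (m + 1), (U (m + 1) j : ℤ) := by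
      rw [Finset.sum_Icc_succ_top (by omega : k + 2 ≤ m + 2), Utop]
      simp
    have h2 : (∑ j ∈ Finset.Icc (k + 1) (m + 1), 2 * (U m j : ℤ))
        = 2 * ∑ j ∈ Finset.Icc (k + 1) m, (U m j : ℤ) := by
      rw [Finset.sum_Icc_succ_top (by omega : k + 1 ≤ m + 1), Utop, Finset.mul_sum]
      simp
    rw [h1, h2]
  rw [hS, hT]
  ring

lemma GS (m k : ℕ) (hk : k + 1 ≤ m) :
    Gm m (k + 1) = Gm m k + (U m k : ℤ) + (U m (k + 1) : ℤ) := by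
  unfold Gm
  rw [Finset.sum_range_succ]
  have hins : Finset.Icc (k + 1) m = insert (k + 1) (Finset.Icc (k + 2) m) := by
    ext x
    simp only [Finset.mem_Icc, Finset.mem_insert]
    omega
  rw [hins, Finset.sum_insert (by simp [Finset.mem_Icc])]
  ring

lemma Arec (t : ℕ) : A (t + 1) = (C t : ℤ) - A t := by
  unfold A
  rw [Finset.sum_range_succ' (fun j => ((-1 : ℤ)) ^ j * (C (t + 1 - 1 - j) : ℤ)) t]
  have : ∀ j ∈ Finset.range t,
      ((-1 : ℤ)) ^ (j + 1) * (C (t + 1 - 1 - (j + 1)) : ℤ)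
        = -(((-1 : ℤ)) ^ j * (C (t - 1 - j) : ℤ)) := by
    intro j _
    rw [show t + 1 - 1 - (j + 1) = t - 1 - j from by omega]
    ring
  rw [Finset.sum_congr rfl this, Finset.sum_neg_distrib]
  simp
  ring

lemma triple (t : ℕ) :
    Gm (3 * t) t = A t
    ∧ Gm (3 * t + 1) t = -A t - 2 ^ t * (Nat.choose (2 * t) (t + 1) : ℤ)
    ∧ Gm (3 * t + 2) t = A t - 2 ^ t *
        (2 * (Nat.choose (2 * t) (t + 1) : ℤ) + 2 * (Nat.choose (2 * t) t : ℤ)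
          + (Nat.choose (2 * t) (t + 2) : ℤ)) := by
  induction t with
  | zero =>
    refine ⟨?_, ?_, ?_⟩ <;>
      norm_num [Gm, A, U, show Finset.Icc 1 1 = {1} from rfl,
        show Finset.Icc 1 2 = {1, 2} from rfl, Finset.sum_insert]
  | succ t ih =>
    obtain ⟨ha, hb, hc⟩ := ih
    -- evaluations of the boundary U's
    have eU1 : U (3 * t + 2) t = Nat.choose (2 * t + 2) t * 2 ^ t := by
      unfold U; rw [show 3 * t + 2 - t = 2 * t + 2 from by omega]
    have eU2 : U (3 * t + 2) (t + 1) = Nat.choose (2 * t + 1) (t + 1) * 2 ^ (t + 1) := by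
      unfold U; rw [show 3 * t + 2 - (t + 1) = 2 * t + 1 from by omega]
    have eU3 : U (3 * t + 3) t = Nat.choose (2 * t + 3) t * 2 ^ t := by
      unfold U; rw [show 3 * t + 3 - t = 2 * t + 3 from by omega]
    have eU4 : U (3 * t + 3) (t + 1) = Nat.choose (2 * t + 2) (t + 1) * 2 ^ (t + 1) := by
      unfold U; rw [show 3 * t + 3 - (t + 1) = 2 * t + 2 from by omega]
    -- row reduction lemmas
    have q0 : Nat.choose (2 * t + 1) t = Nat.choose (2 * t + 1) (t + 1) := by
      have h := Nat.choose_symm (show t + 1 ≤ 2 * t + 1 from by omega)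
      rw [show 2 * t + 1 - (t + 1) = t from by omega] at h
      exact h
    have q1 : Nat.choose (2 * t + 1) (t + 1)
        = Nat.choose (2 * t) t + Nat.choose (2 * t) (t + 1) := Nat.choose_succ_succ _ _
    have q2 : Nat.choose (2 * t + 1) (t + 2)
        = Nat.choose (2 * t) (t + 1) + Nat.choose (2 * t) (t + 2) := Nat.choose_succ_succ _ _
    have q3 : Nat.choose (2 * t + 1) (t + 3)
        = Nat.choose (2 * t) (t + 2) + Nat.choose (2 * t) (t + 3) := Nat.choose_succ_succ _ _
    have r0 : Nat.choose (2 * t + 2) t = Nat.choose (2 * t + 2) (t + 2) := by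
      have h := Nat.choose_symm (show t + 2 ≤ 2 * t + 2 from by omega)
      rw [show 2 * t + 2 - (t + 2) = t from by omega] at h
      exact h
    have r1 : Nat.choose (2 * t + 2) (t + 1)
        = Nat.choose (2 * t + 1) t + Nat.choose (2 * t + 1) (t + 1) := Nat.choose_succ_succ _ _
    have r2 : Nat.choose (2 * t + 2) (t + 2)
        = Nat.choose (2 * t + 1) (t + 1) + Nat.choose (2 * t + 1) (t + 2) :=
      Nat.choose_succ_succ _ _
    have r3 : Nat.choose (2 * t + 2) (t + 3)
        = Nat.choose (2 * t + 1) (t + 2) + Nat.choose (2 * t + 1) (t + 3) :=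
      Nat.choose_succ_succ _ _
    have s0 : Nat.choose (2 * t + 3) t = Nat.choose (2 * t + 3) (t + 3) := by
      have h := Nat.choose_symm (show t + 3 ≤ 2 * t + 3 from by omega)
      rw [show 2 * t + 3 - (t + 3) = t from by omega] at h
      exact h
    have s3 : Nat.choose (2 * t + 3) (t + 3)
        = Nat.choose (2 * t + 2) (t + 2) + Nat.choose (2 * t + 2) (t + 3) :=
      Nat.choose_succ_succ _ _
    -- recurrences
    have hGS2 : Gm (3 * t + 2) (t + 1)
        = Gm (3 * t + 2) t + (U (3 * t + 2) t : ℤ) + (U (3 * t + 2) (t + 1) : ℤ) :=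
      GS _ _ (by omega)
    have hGRa : Gm (3 * t + 3) (t + 1)
        = Gm (3 * t + 2) (t + 1) + 2 * Gm (3 * t + 1) t := GR (3 * t + 1) t (by omega)
    have hGRb : Gm (3 * t + 4) (t + 1)
        = Gm (3 * t + 3) (t + 1) + 2 * Gm (3 * t + 2) t := GR (3 * t + 2) t (by omega)
    have hGS3 : Gm (3 * t + 3) (t + 1)
        = Gm (3 * t + 3) t + (U (3 * t + 3) t : ℤ) + (U (3 * t + 3) (t + 1) : ℤ) :=
      GS _ _ (by omega)
    have hGRc : Gm (3 * t + 5) (t + 1)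
        = Gm (3 * t + 4) (t + 1) + 2 * Gm (3 * t + 3) t := GR (3 * t + 3) t (by omega)
    have hCt : (C t : ℤ) = (Nat.choose (2 * t) t : ℤ) * 2 ^ t := by
      unfold C; push_cast; ring
    have ha' : Gm (3 * t + 3) (t + 1) = A (t + 1) := by
      rw [hGRa, hGS2, hb, hc, eU1, eU2, Arec, hCt, r0, r2, q1, q2]
      push_cast
      ring
    have hb' : Gm (3 * t + 4) (t + 1)
        = -A (t + 1) - 2 ^ (t + 1) * (Nat.choose (2 * t + 2) (t + 2) : ℤ) := by
      rw [hGRb, ha', hc, Arec, hCt, r2, q1, q2]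
      push_cast
      ring
    have hc' : Gm (3 * t + 5) (t + 1)
        = A (t + 1) - 2 ^ (t + 1) *
          (2 * (Nat.choose (2 * t + 2) (t + 2) : ℤ)
            + 2 * (Nat.choose (2 * t + 2) (t + 1) : ℤ)
            + (Nat.choose (2 * t + 2) (t + 3) : ℤ)) := by
      have h33 : Gm (3 * t + 3) t
          = Gm (3 * t + 3) (t + 1) - (U (3 * t + 3) t : ℤ) - (U (3 * t + 3) (t + 1) : ℤ) := by
        rw [hGS3]; ring
      rw [hGRc, hb', h33, ha', eU3, eU4, Arec, hCt, s0, s3, r1, r2, r3, q0, q1, q2, q3]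
      push_cast
      ring
    refine ⟨?_, ?_, ?_⟩
    · rw [show 3 * (t + 1) = 3 * t + 3 from by ring]; exact ha'
    · rw [show 3 * (t + 1) + 1 = 3 * t + 4 from by ring,
        show 2 * (t + 1) = 2 * t + 2 from by ring,
        show t + 1 + 1 = t + 2 from by ring]; exact hb'
    · rw [show 3 * (t + 1) + 2 = 3 * t + 5 from by ring,
        show 2 * (t + 1) = 2 * t + 2 from by ring,
        show t + 1 + 1 = t + 2 from by ring,
        show t + 1 + 2 = t + 3 from by ring]; exact hc'

theorem stmt13 (t : ℕ) (ht : 1 ≤ t) :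
    ((∑ j ∈ Finset.range t, U (3 * t) j : ℤ)
        - ∑ j ∈ Finset.Icc (t + 1) (3 * t), (U (3 * t) j : ℤ))
      = ∑ j ∈ Finset.range t, (-1) ^ j * (C (t - 1 - j) : ℤ) := by
  have h := (triple t).1
  unfold Gm A at h
  rw [← h]
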